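/- Let g(x) = (19/6)x − (16/3)x³ + (8/3)x⁵. Then for every t ∈ [0, 1/2], 2t ≤ g'(−1/2 + t) ≤ 13t, where g' is the derivative of g. -/

import Mathlib

/-- Bounds on the derivative of the quintic `g(x) = (19/6)x - (16/3)x³ + (8/3)x⁵` near
its minimum at `-1/2`: for `t ∈ [0,1/2]`, `2t ≤ g'(-1/2 + t) ≤ 13t`. -/
theorem quintic_deriv_bounds :
    let g : ℝ → ℝ := fun x => 19 / 6 * x - 16 / 3 * x ^ 3 + 8 / 3 * x ^ 5
    ∀ t ∈ Set.Icc (0 : ℝ) (1 / 2),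
      2 * t ≤ deriv g (-1 / 2 + t) ∧ deriv g (-1 / 2 + t) ≤ 13 * t := by
  intro g t ht
  obtain ⟨ht0, ht1⟩ := ht
  have hd : ∀ x : ℝ, deriv g x = 19 / 6 - 16 * x ^ 2 + 40 / 3 * x ^ 4 := by
    intro x
    have h : HasDerivAt g (19 / 6 - 16 * x ^ 2 + 40 / 3 * x ^ 4) x := by
      have := (((hasDerivAt_id x).const_mul (19/6:ℝ)).sub
        (((hasDerivAt_pow 3 x)).const_mul (16/3:ℝ))).add
        (((hasDerivAt_pow 5 x)).const_mul (8/3:ℝ))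
      refine this.congr_deriv ?_
      ring
    exact h.deriv
  rw [hd]
  constructor <;> nlinarith [sq_nonneg t, sq_nonneg (t - 1/2), sq_nonneg (t*t), sq_nonneg (t*(t-1/2)), sq_nonneg (t^2 - t)]
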